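/- If !L* derives !B, Π → A, where B ⊆ G_R for a finite set R of Buszkowski rules, and Π, A contain neither ! nor \, then L* + R derives Π → A. -/

import Mathlib

/-- Formulae (types) of the Lambek calculus with a modality:
`var` = primitive type, `div B A` = B / A, `ldiv A B` = A \ B, `bang A` = !A. -/
inductive Fm : Type
  | var : ℕ → Fm
  | div : Fm → Fm → Fm
  | ldiv : Fm → Fm → Fm
  | bang : Fm → Fm
  deriving DecidableEq

open Fm

/-- A Buszkowski rule: either (B₁) "from Φ₁ → p and Φ₂ → q derive Φ₁, Φ₂ → r"
or (B₂) "from Φ, q → p derive Φ → r", for fixed variables p, q, r. -/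
inductive BRule : Type
  | b1 (p q r : ℕ)
  | b2 (p q r : ℕ)
  deriving DecidableEq

/-- L* + R: the Lambek calculus L* (empty antecedents allowed) extended with
a finite set R of Buszkowski rules. -/
inductive LStarR (R : Finset BRule) : List Fm → Fm → Prop
  | ax (A : Fm) : LStarR R [A] A
  | divL (Γ Δ₁ Δ₂ : List Fm) (A B C : Fm) :
      LStarR R Γ A → LStarR R (Δ₁ ++ B :: Δ₂) C →
      LStarR R (Δ₁ ++ div B A :: (Γ ++ Δ₂)) C
  | divR (Γ : List Fm) (A B : Fm) :
      LStarR R (Γ ++ [A]) B → LStarR R Γ (div B A)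
  | ldivL (Γ Δ₁ Δ₂ : List Fm) (A B C : Fm) :
      LStarR R Γ A → LStarR R (Δ₁ ++ B :: Δ₂) C →
      LStarR R (Δ₁ ++ Γ ++ ldiv A B :: Δ₂) C
  | ldivR (Γ : List Fm) (A B : Fm) :
      LStarR R (A :: Γ) B → LStarR R Γ (ldiv A B)
  | b1 (p q r : ℕ) (Φ₁ Φ₂ : List Fm) :
      BRule.b1 p q r ∈ R → LStarR R Φ₁ (var p) → LStarR R Φ₂ (var q) →
      LStarR R (Φ₁ ++ Φ₂) (var r)
  | b2 (p q r : ℕ) (Φ : List Fm) :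
      BRule.b2 p q r ∈ R → LStarR R (Φ ++ [var q]) (var p) →
      LStarR R Φ (var r)

/-- The calculus !L*: the Lambek calculus L* (with empty antecedents allowed)
extended with a relevant modality `!` with rules (!→), (→!), (perm₁), (perm₂), (contr). -/
inductive BangL : List Fm → Fm → Prop
  | ax (A : Fm) : BangL [A] A
  | divL (Γ Δ₁ Δ₂ : List Fm) (A B C : Fm) :
      BangL Γ A → BangL (Δ₁ ++ B :: Δ₂) C →
      BangL (Δ₁ ++ div B A :: (Γ ++ Δ₂)) C
  | divR (Γ : List Fm) (A B : Fm) :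
      BangL (Γ ++ [A]) B → BangL Γ (div B A)
  | ldivL (Γ Δ₁ Δ₂ : List Fm) (A B C : Fm) :
      BangL Γ A → BangL (Δ₁ ++ B :: Δ₂) C →
      BangL (Δ₁ ++ Γ ++ ldiv A B :: Δ₂) C
  | ldivR (Γ : List Fm) (A B : Fm) :
      BangL (A :: Γ) B → BangL Γ (ldiv A B)
  | bangL (Γ₁ Γ₂ : List Fm) (A C : Fm) :
      BangL (Γ₁ ++ A :: Γ₂) C → BangL (Γ₁ ++ bang A :: Γ₂) C
  | bangR (Γ : List Fm) (B : Fm) :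
      BangL (Γ.map bang) B → BangL (Γ.map bang) (bang B)
  | perm1 (Δ₁ Γ Δ₂ : List Fm) (A C : Fm) :
      BangL (Δ₁ ++ bang A :: (Γ ++ Δ₂)) C → BangL (Δ₁ ++ Γ ++ bang A :: Δ₂) C
  | perm2 (Δ₁ Γ Δ₂ : List Fm) (A C : Fm) :
      BangL (Δ₁ ++ Γ ++ bang A :: Δ₂) C → BangL (Δ₁ ++ bang A :: (Γ ++ Δ₂)) C
  | contr (Δ₁ Δ₂ : List Fm) (A C : Fm) :
      BangL (Δ₁ ++ bang A :: bang A :: Δ₂) C → BangL (Δ₁ ++ bang A :: Δ₂) C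

/-- G_R: the formula (r/q)/p for each (B₁)-rule and r/(p/q) for each (B₂)-rule of R. -/
def GRset (R : Finset BRule) : Set Fm :=
  {F | ∃ p q r : ℕ,
    (BRule.b1 p q r ∈ R ∧ F = div (div (var r) (var q)) (var p)) ∨
    (BRule.b2 p q r ∈ R ∧ F = div (var r) (div (var p) (var q)))}

/-- A formula contains no occurrence of `!`. -/
def bangFree : Fm → Prop
  | var _ => True
  | div a b => bangFree a ∧ bangFree b
  | ldiv a b => bangFree a ∧ bangFree b
  | bang _ => False

/-- A formula contains no occurrence of `\` (left division). -/
def ldivFree : Fm → Prop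
  | var _ => True
  | div a b => ldivFree a ∧ ldivFree b
  | ldiv _ _ => False
  | bang a => ldivFree a


section Infra

variable {R : Finset BRule}

/-- Height-indexed version of `LStarR` (derivations of height ≤ n). -/
inductive Deriv (R : Finset BRule) : ℕ → List Fm → Fm → Prop
  | ax (n : ℕ) (A : Fm) : Deriv R n [A] A
  | divL (n : ℕ) (Γ Δ₁ Δ₂ : List Fm) (A B C : Fm) :
      Deriv R n Γ A → Deriv R n (Δ₁ ++ B :: Δ₂) C →
      Deriv R (n+1) (Δ₁ ++ div B A :: (Γ ++ Δ₂)) C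
  | divR (n : ℕ) (Γ : List Fm) (A B : Fm) :
      Deriv R n (Γ ++ [A]) B → Deriv R (n+1) Γ (div B A)
  | ldivL (n : ℕ) (Γ Δ₁ Δ₂ : List Fm) (A B C : Fm) :
      Deriv R n Γ A → Deriv R n (Δ₁ ++ B :: Δ₂) C →
      Deriv R (n+1) (Δ₁ ++ Γ ++ ldiv A B :: Δ₂) C
  | ldivR (n : ℕ) (Γ : List Fm) (A B : Fm) :
      Deriv R n (A :: Γ) B → Deriv R (n+1) Γ (ldiv A B)
  | b1 (n : ℕ) (p q r : ℕ) (Φ₁ Φ₂ : List Fm) :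
      BRule.b1 p q r ∈ R → Deriv R n Φ₁ (var p) → Deriv R n Φ₂ (var q) →
      Deriv R (n+1) (Φ₁ ++ Φ₂) (var r)
  | b2 (n : ℕ) (p q r : ℕ) (Φ : List Fm) :
      BRule.b2 p q r ∈ R → Deriv R n (Φ ++ [var q]) (var p) →
      Deriv R (n+1) Φ (var r)

theorem Deriv.toL {n : ℕ} {Γ : List Fm} {C : Fm} (d : Deriv R n Γ C) : LStarR R Γ C := by
  induction d with
  | ax n A => exact LStarR.ax A
  | divL n Γ Δ₁ Δ₂ A B C h1 h2 ih1 ih2 => exact LStarR.divL Γ Δ₁ Δ₂ A B C ih1 ih2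
  | divR n Γ A B h ih => exact LStarR.divR Γ A B ih
  | ldivL n Γ Δ₁ Δ₂ A B C h1 h2 ih1 ih2 => exact LStarR.ldivL Γ Δ₁ Δ₂ A B C ih1 ih2
  | ldivR n Γ A B h ih => exact LStarR.ldivR Γ A B ih
  | b1 n p q r Φ₁ Φ₂ hR h1 h2 ih1 ih2 => exact LStarR.b1 p q r Φ₁ Φ₂ hR ih1 ih2
  | b2 n p q r Φ hR h ih => exact LStarR.b2 p q r Φ hR ih

theorem Deriv.succ {n : ℕ} {Γ : List Fm} {C : Fm} (d : Deriv R n Γ C) : Deriv R (n+1) Γ C := by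
  induction d with
  | ax n A => exact Deriv.ax _ A
  | divL n Γ Δ₁ Δ₂ A B C h1 h2 ih1 ih2 => exact Deriv.divL _ Γ Δ₁ Δ₂ A B C ih1 ih2
  | divR n Γ A B h ih => exact Deriv.divR _ Γ A B ih
  | ldivL n Γ Δ₁ Δ₂ A B C h1 h2 ih1 ih2 => exact Deriv.ldivL _ Γ Δ₁ Δ₂ A B C ih1 ih2
  | ldivR n Γ A B h ih => exact Deriv.ldivR _ Γ A B ih
  | b1 n p q r Φ₁ Φ₂ hR h1 h2 ih1 ih2 => exact Deriv.b1 _ p q r Φ₁ Φ₂ hR ih1 ih2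
  | b2 n p q r Φ hR h ih => exact Deriv.b2 _ p q r Φ hR ih

theorem Deriv.mono {n m : ℕ} {Γ : List Fm} {C : Fm} (d : Deriv R n Γ C) (h : n ≤ m) :
    Deriv R m Γ C := by
  induction h with
  | refl => exact d
  | step _ ih => exact ih.succ

theorem LStarR.toD {Γ : List Fm} {C : Fm} (d : LStarR R Γ C) : ∃ n, Deriv R n Γ C := by
  induction d with
  | ax A => exact ⟨0, Deriv.ax 0 A⟩
  | divL Γ Δ₁ Δ₂ A B C h1 h2 ih1 ih2 =>
    obtain ⟨n1, d1⟩ := ih1; obtain ⟨n2, d2⟩ := ih2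
    exact ⟨max n1 n2 + 1, Deriv.divL _ Γ Δ₁ Δ₂ A B C (d1.mono (le_max_left _ _))
      (d2.mono (le_max_right _ _))⟩
  | divR Γ A B h ih => obtain ⟨n, d⟩ := ih; exact ⟨n+1, Deriv.divR n Γ A B d⟩
  | ldivL Γ Δ₁ Δ₂ A B C h1 h2 ih1 ih2 =>
    obtain ⟨n1, d1⟩ := ih1; obtain ⟨n2, d2⟩ := ih2
    exact ⟨max n1 n2 + 1, Deriv.ldivL _ Γ Δ₁ Δ₂ A B C (d1.mono (le_max_left _ _))
      (d2.mono (le_max_right _ _))⟩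
  | ldivR Γ A B h ih => obtain ⟨n, d⟩ := ih; exact ⟨n+1, Deriv.ldivR n Γ A B d⟩
  | b1 p q r Φ₁ Φ₂ hR h1 h2 ih1 ih2 =>
    obtain ⟨n1, d1⟩ := ih1; obtain ⟨n2, d2⟩ := ih2
    exact ⟨max n1 n2 + 1, Deriv.b1 _ p q r Φ₁ Φ₂ hR (d1.mono (le_max_left _ _))
      (d2.mono (le_max_right _ _))⟩
  | b2 p q r Φ hR h ih => obtain ⟨n, d⟩ := ih; exact ⟨n+1, Deriv.b2 n p q r Φ hR d⟩

/-- Locate an occurrence `E` within a concatenation. -/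
theorem splitE {α : Type} {l₁ l₂ Δ₁ Δ₂ : List α} {E : α} (h : l₁ ++ l₂ = Δ₁ ++ E :: Δ₂) :
    (∃ t, l₁ = Δ₁ ++ E :: t ∧ Δ₂ = t ++ l₂) ∨ (∃ s, Δ₁ = l₁ ++ s ∧ l₂ = s ++ E :: Δ₂) := by
  rcases List.append_eq_append_iff.mp h with ⟨a', h1, h2⟩ | ⟨c', h1, h2⟩
  · exact Or.inr ⟨a', h1, h2⟩
  · rcases c' with _ | ⟨x, t⟩
    · exact Or.inr ⟨[], by simp [h1], by simpa using h2.symm⟩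
    · obtain ⟨rfl, h3⟩ : E = x ∧ Δ₂ = t ++ l₂ := by
        constructor <;> [exact (List.cons.injEq _ _ _ _ ▸ h2).1; exact (List.cons.injEq _ _ _ _ ▸ h2).2]
      exact Or.inl ⟨t, h1, h3⟩

theorem splitC {α : Type} {Λ Δ₁ Δ₂ : List α} {X E : α} (h : X :: Λ = Δ₁ ++ E :: Δ₂) :
    (Δ₁ = [] ∧ X = E ∧ Λ = Δ₂) ∨ (∃ t, Δ₁ = X :: t ∧ Λ = t ++ E :: Δ₂) := by
  rcases Δ₁ with _ | ⟨y, t⟩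
  · simp only [List.nil_append, List.cons.injEq] at h
    exact Or.inl ⟨rfl, h.1, h.2⟩
  · simp only [List.cons_append, List.cons.injEq] at h
    exact Or.inr ⟨t, by rw [h.1], h.2⟩

end Infra

section Cut

variable {R : Finset BRule}

theorem cutD (E : Fm) (n m : ℕ) (Ξ Γ₂ : List Fm) (C : Fm)
    (d1 : Deriv R n Ξ E) (d2 : Deriv R m Γ₂ C) :
    ∀ Δ₁ Δ₂ : List Fm, Γ₂ = Δ₁ ++ E :: Δ₂ → LStarR R (Δ₁ ++ Ξ ++ Δ₂) C := by
  cases d2 with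
  | ax m' A =>
    intro Δ₁ Δ₂ hΓ
    rcases splitC hΓ with ⟨rfl, rfl, h⟩ | ⟨t, rfl, h⟩
    · subst h; simpa using d1.toL
    · exact absurd h (by simp)
  | divL k Γ Θ₁ Θ₂ A B C h1 h2 =>
    intro Δ₁ Δ₂ hΓ
    rcases splitE hΓ with ⟨t, hΘ₁, hΔ₂⟩ | ⟨s, hΔ₁, hs⟩
    · -- E inside Θ₁
      have hrec := cutD E n k Ξ _ C d1 h2 Δ₁ (t ++ B :: Θ₂) (by rw [hΘ₁]; simp)
      have res := LStarR.divL Γ (Δ₁ ++ Ξ ++ t) Θ₂ A B C h1.toL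
        (by simpa [List.append_assoc] using hrec)
      rw [hΔ₂]; simpa [List.append_assoc] using res
    · rcases splitC hs with ⟨rfl, rfl, hrest⟩ | ⟨t, hst, hrest⟩
      · -- E = div B A : principal
        subst hrest
        cases d1 with
        | ax n' =>
          have res := LStarR.divL Γ Θ₁ Θ₂ A B C h1.toL h2.toL
          rw [hΔ₁]; simpa [List.append_assoc] using res
        | divR k' G AA BB h3 =>
          have c1 := cutD A k k' Γ (Ξ ++ [A]) B h1 h3 Ξ [] (by simp)
          obtain ⟨n2, dB⟩ := c1.toD
          have c2 := cutD B n2 k _ (Θ₁ ++ B :: Θ₂) C dB h2 Θ₁ Θ₂ rfl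
          rw [hΔ₁]; simpa [List.append_assoc] using c2
        | divL k' G T1 T2 X Y Z h3 h4 =>
          have d2' := Deriv.divL k Γ Θ₁ Θ₂ A B C h1 h2
          have hrec := cutD (div B A) k' (k+1) (T1 ++ Y :: T2) _ C h4 d2' Θ₁ (Γ ++ Θ₂) rfl
          have res := LStarR.divL G (Θ₁ ++ T1) (T2 ++ Γ ++ Θ₂) X Y C h3.toL
            (by simpa [List.append_assoc] using hrec)
          rw [hΔ₁]; simpa [List.append_assoc] using res
        | ldivL k' G T1 T2 X Y Z h3 h4 =>
          have d2' := Deriv.divL k Γ Θ₁ Θ₂ A B C h1 h2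
          have hrec := cutD (div B A) k' (k+1) (T1 ++ Y :: T2) _ C h4 d2' Θ₁ (Γ ++ Θ₂) rfl
          have res := LStarR.ldivL G (Θ₁ ++ T1) (T2 ++ Γ ++ Θ₂) X Y C h3.toL
            (by simpa [List.append_assoc] using hrec)
          rw [hΔ₁]; simpa [List.append_assoc] using res
      · -- E strictly after div B A : in Γ or Θ₂
        rcases splitE hrest with ⟨u, hΓ', hΔ₂'⟩ | ⟨s₂, ht, hΘ₂⟩
        · -- E in Γ
          have hrec := cutD E n k Ξ Γ A d1 h1 t u hΓ'
          have res := LStarR.divL (t ++ Ξ ++ u) Θ₁ Θ₂ A B C hrec h2.toL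
          rw [hΔ₁, hst, hΔ₂']; simpa [List.append_assoc] using res
        · -- E in Θ₂
          have hrec := cutD E n k Ξ (Θ₁ ++ B :: Θ₂) C d1 h2 (Θ₁ ++ B :: s₂) Δ₂
            (by rw [hΘ₂]; simp)
          have res := LStarR.divL Γ Θ₁ (s₂ ++ Ξ ++ Δ₂) A B C h1.toL
            (by simpa [List.append_assoc] using hrec)
          rw [hΔ₁, hst, ht]; simpa [List.append_assoc] using res
  | divR k G A B h1 =>
    intro Δ₁ Δ₂ hΓ
    have hrec := cutD E n k Ξ (Γ₂ ++ [A]) B d1 h1 Δ₁ (Δ₂ ++ [A]) (by rw [hΓ]; simp)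
    exact LStarR.divR _ A B (by simpa [List.append_assoc] using hrec)
  | ldivL k Γ Θ₁ Θ₂ A B C h1 h2 =>
    intro Δ₁ Δ₂ hΓ
    rw [show Θ₁ ++ Γ ++ ldiv A B :: Θ₂ = (Θ₁ ++ Γ) ++ (ldiv A B :: Θ₂) by simp] at hΓ
    rcases splitE hΓ with ⟨t, hΘΓ, hΔ₂⟩ | ⟨s, hΔ₁, hs⟩
    · -- E in Θ₁ ++ Γ
      rcases splitE hΘΓ with ⟨u, hΓ', htu⟩ | ⟨s₂, ht, hΓ'⟩
      · -- E in Θ₁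
        have hrec := cutD E n k Ξ (Θ₁ ++ B :: Θ₂) C d1 h2 Δ₁ (u ++ B :: Θ₂)
          (by rw [hΓ']; simp)
        have res := LStarR.ldivL Γ (Δ₁ ++ Ξ ++ u) Θ₂ A B C h1.toL
          (by simpa [List.append_assoc] using hrec)
        rw [hΔ₂, htu]; simpa [List.append_assoc] using res
      · -- E in Γ
        have hrec := cutD E n k Ξ Γ A d1 h1 s₂ t hΓ'
        have res := LStarR.ldivL (s₂ ++ Ξ ++ t) Θ₁ Θ₂ A B C hrec h2.toL
        rw [hΔ₂, ht]; simpa [List.append_assoc] using res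
    · rcases splitC hs with ⟨rfl, rfl, hrest⟩ | ⟨t, hst, hrest⟩
      · -- E = ldiv A B : principal
        subst hrest
        cases d1 with
        | ax n' =>
          have res := LStarR.ldivL Γ Θ₁ Θ₂ A B C h1.toL h2.toL
          rw [hΔ₁]; simpa [List.append_assoc] using res
        | ldivR k' G AA BB h3 =>
          have c1 := cutD A k k' Γ (A :: Ξ) B h1 h3 [] Ξ rfl
          obtain ⟨n2, dB⟩ := c1.toD
          have c2 := cutD B n2 k _ (Θ₁ ++ B :: Θ₂) C dB h2 Θ₁ Θ₂ rfl
          rw [hΔ₁]; simpa [List.append_assoc] using c2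
        | divL k' G T1 T2 X Y Z h3 h4 =>
          have d2' := Deriv.ldivL k Γ Θ₁ Θ₂ A B C h1 h2
          have hrec := cutD (ldiv A B) k' (k+1) (T1 ++ Y :: T2) _ C h4 d2' (Θ₁ ++ Γ) Θ₂
            (by simp)
          have res := LStarR.divL G (Θ₁ ++ Γ ++ T1) (T2 ++ Θ₂) X Y C h3.toL
            (by simpa [List.append_assoc] using hrec)
          rw [hΔ₁]; simpa [List.append_assoc] using res
        | ldivL k' G T1 T2 X Y Z h3 h4 =>
          have d2' := Deriv.ldivL k Γ Θ₁ Θ₂ A B C h1 h2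
          have hrec := cutD (ldiv A B) k' (k+1) (T1 ++ Y :: T2) _ C h4 d2' (Θ₁ ++ Γ) Θ₂
            (by simp)
          have res := LStarR.ldivL G (Θ₁ ++ Γ ++ T1) (T2 ++ Θ₂) X Y C h3.toL
            (by simpa [List.append_assoc] using hrec)
          rw [hΔ₁]; simpa [List.append_assoc] using res
      · -- E in Θ₂
        have hrec := cutD E n k Ξ (Θ₁ ++ B :: Θ₂) C d1 h2 (Θ₁ ++ B :: t) Δ₂
          (by rw [hrest]; simp)
        have res := LStarR.ldivL Γ Θ₁ (t ++ Ξ ++ Δ₂) A B C h1.toL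
          (by simpa [List.append_assoc] using hrec)
        rw [hΔ₁, hst]; simpa [List.append_assoc] using res
  | ldivR k G A B h1 =>
    intro Δ₁ Δ₂ hΓ
    have hrec := cutD E n k Ξ (A :: Γ₂) B d1 h1 (A :: Δ₁) Δ₂ (by rw [hΓ]; rfl)
    exact LStarR.ldivR _ A B (by simpa [List.append_assoc] using hrec)
  | b1 k p q r Φ₁ Φ₂ hR h1 h2 =>
    intro Δ₁ Δ₂ hΓ
    rcases splitE hΓ with ⟨t, hΦ₁, hΔ₂⟩ | ⟨s, hΔ₁, hΦ₂⟩
    · have hrec := cutD E n k Ξ Φ₁ (var p) d1 h1 Δ₁ t hΦ₁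
      have res := LStarR.b1 p q r (Δ₁ ++ Ξ ++ t) Φ₂ hR hrec h2.toL
      rw [hΔ₂]; simpa [List.append_assoc] using res
    · have hrec := cutD E n k Ξ Φ₂ (var q) d1 h2 s Δ₂ hΦ₂
      have res := LStarR.b1 p q r Φ₁ (s ++ Ξ ++ Δ₂) hR h1.toL hrec
      rw [hΔ₁]; simpa [List.append_assoc] using res
  | b2 k p q r PP hR h1 =>
    intro Δ₁ Δ₂ hΓ
    have hrec := cutD E n k Ξ _ (var p) d1 h1 Δ₁ (Δ₂ ++ [var q]) (by rw [hΓ]; simp)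
    exact LStarR.b2 p q r _ hR (by simpa [List.append_assoc] using hrec)
termination_by (sizeOf E, n + m)
decreasing_by
  all_goals simp_wf
  all_goals (try subst_vars)
  all_goals first
    | (apply Prod.Lex.right; omega)
    | (apply Prod.Lex.left; simp only [Fm.div.sizeOf_spec, Fm.ldiv.sizeOf_spec]; omega)
    | (apply Prod.Lex.left; omega)

theorem cutL {E : Fm} {Ξ Δ₁ Δ₂ : List Fm} {C : Fm} (d1 : LStarR R Ξ E)
    (d2 : LStarR R (Δ₁ ++ E :: Δ₂) C) : LStarR R (Δ₁ ++ Ξ ++ Δ₂) C := by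
  obtain ⟨n, e1⟩ := d1.toD
  obtain ⟨m, e2⟩ := d2.toD
  exact cutD E n m Ξ _ C e1 e2 Δ₁ Δ₂ rfl

end Cut

section Main

variable {R : Finset BRule}

/-- Formula containing neither `!` nor `\`. -/
def good (F : Fm) : Prop := bangFree F ∧ ldivFree F

theorem good_div {B A : Fm} (h : good (div B A)) : good B ∧ good A :=
  ⟨⟨h.1.1, h.2.1⟩, ⟨h.1.2, h.2.2⟩⟩

theorem good_GR {G : Fm} (h : G ∈ GRset R) : good G := by
  obtain ⟨p, q, r, h⟩ := h
  rcases h with ⟨-, rfl⟩ | ⟨-, rfl⟩ <;> constructor <;> simp [bangFree, ldivFree]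

theorem derive_GR {G : Fm} (h : G ∈ GRset R) : LStarR R [] G := by
  obtain ⟨p, q, r, h⟩ := h
  rcases h with ⟨hm, rfl⟩ | ⟨hm, rfl⟩
  · exact LStarR.divR [] (var p) _
      (LStarR.divR ([] ++ [var p]) (var q) (var r)
        (LStarR.b1 p q r [var p] [var q] hm (LStarR.ax _) (LStarR.ax _)))
  · exact LStarR.divR [] (div (var p) (var q)) (var r)
      (LStarR.b2 p q r _ hm
        (LStarR.divL [var q] [] [] (var q) (var p) (var p) (LStarR.ax _) (LStarR.ax _)))

/-- `Del R Γ Φ`: `Γ` is `Φ` with inserted formulas that are (possibly `!`-ed)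
members of `G_R`; the kept formulas are `!`- and `\`-free. -/
inductive Del (R : Finset BRule) : List Fm → List Fm → Prop
  | nil : Del R [] []
  | keep {Γ Φ : List Fm} {x : Fm} : good x → Del R Γ Φ → Del R (x :: Γ) (x :: Φ)
  | delb {Γ Φ : List Fm} {G : Fm} : G ∈ GRset R → Del R Γ Φ → Del R (bang G :: Γ) Φ
  | delg {Γ Φ : List Fm} {G : Fm} : G ∈ GRset R → Del R Γ Φ → Del R (G :: Γ) Φ

theorem Del.append {Γ₁ Γ₂ Φ₁ Φ₂ : List Fm} (h1 : Del R Γ₁ Φ₁) (h2 : Del R Γ₂ Φ₂) :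
    Del R (Γ₁ ++ Γ₂) (Φ₁ ++ Φ₂) := by
  induction h1 with
  | nil => exact h2
  | keep hx _ ih => exact Del.keep hx ih
  | delb hG _ ih => exact Del.delb hG ih
  | delg hG _ ih => exact Del.delg hG ih

theorem Del.split {Γ₁ Γ₂ Φ : List Fm} (h : Del R (Γ₁ ++ Γ₂) Φ) :
    ∃ Φ₁ Φ₂, Φ = Φ₁ ++ Φ₂ ∧ Del R Γ₁ Φ₁ ∧ Del R Γ₂ Φ₂ := by
  induction Γ₁ generalizing Φ with
  | nil => exact ⟨[], Φ, rfl, Del.nil, h⟩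
  | cons x Γ₁ ih =>
    cases h with
    | keep hx h' =>
      obtain ⟨Φ₁, Φ₂, rfl, d1, d2⟩ := ih h'
      exact ⟨x :: Φ₁, Φ₂, rfl, Del.keep hx d1, d2⟩
    | delb hG h' =>
      obtain ⟨Φ₁, Φ₂, rfl, d1, d2⟩ := ih h'
      exact ⟨Φ₁, Φ₂, rfl, Del.delb hG d1, d2⟩
    | delg hG h' =>
      obtain ⟨Φ₁, Φ₂, rfl, d1, d2⟩ := ih h'
      exact ⟨Φ₁, Φ₂, rfl, Del.delg hG d1, d2⟩

theorem mainLemma {Γ : List Fm} {C : Fm} (h : BangL Γ C) :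
    ∀ Φ, Del R Γ Φ → good C → LStarR R Φ C := by
  induction h with
  | ax A =>
    intro Φ hd hg
    cases hd with
    | keep hx hd' => cases hd'; exact LStarR.ax A
    | delb hG hd' => exact hg.1.elim
    | delg hG hd' => cases hd'; exact derive_GR hG
  | divL Γ₀ Θ₁ Θ₂ A B C h1 h2 ih1 ih2 =>
    intro Φ hd hg
    obtain ⟨Φ₁, Ψ, rfl, d1, d2⟩ := Del.split hd
    cases d2 with
    | keep hx d2' =>
      obtain ⟨Φ₀, Φ₂, rfl, dg, d3⟩ := Del.split d2'
      obtain ⟨hB, hA⟩ := good_div hx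
      have r1 := ih1 Φ₀ dg hA
      have r2 := ih2 (Φ₁ ++ B :: Φ₂) (Del.append d1 (Del.keep hB d3)) hg
      exact LStarR.divL Φ₀ Φ₁ Φ₂ A B C r1 r2
    | delg hGR d2' =>
      obtain ⟨Φ₀, Φ₂, rfl, dg, d3⟩ := Del.split d2'
      obtain ⟨p, q, rr, hh⟩ := hGR
      rcases hh with ⟨hm, heq⟩ | ⟨hm, heq⟩
      · injection heq with e1 e2; subst e1; subst e2
        have r1 := ih1 Φ₀ dg ⟨trivial, trivial⟩
        have r2 := ih2 (Φ₁ ++ div (var rr) (var q) :: Φ₂)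
          (Del.append d1 (Del.keep ⟨⟨trivial, trivial⟩, ⟨trivial, trivial⟩⟩ d3)) hg
        have hrq : LStarR R Φ₀ (div (var rr) (var q)) :=
          LStarR.divR Φ₀ (var q) (var rr) (LStarR.b1 p q rr Φ₀ [var q] hm r1 (LStarR.ax _))
        have := cutL hrq r2
        simpa [List.append_assoc] using this
      · injection heq with e1 e2; subst e1; subst e2
        have r1 := ih1 Φ₀ dg ⟨⟨trivial, trivial⟩, ⟨trivial, trivial⟩⟩
        have r2 := ih2 (Φ₁ ++ var rr :: Φ₂)
          (Del.append d1 (Del.keep ⟨trivial, trivial⟩ d3)) hg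
        have step0 : LStarR R ([] ++ div (var p) (var q) :: ([var q] ++ [])) (var p) :=
          LStarR.divL [var q] [] [] (var q) (var p) (var p) (LStarR.ax _) (LStarR.ax _)
        have step1 := cutL r1 step0
        have step2 : LStarR R Φ₀ (var rr) :=
          LStarR.b2 p q rr Φ₀ hm (by simpa [List.append_assoc] using step1)
        have := cutL step2 r2
        simpa [List.append_assoc] using this
  | divR Γ A B h ih =>
    intro Φ hd hg
    obtain ⟨hB, hA⟩ := good_div hg
    exact LStarR.divR Φ A B (ih (Φ ++ [A]) (Del.append hd (Del.keep hA Del.nil)) hB)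
  | ldivL Γ₀ Θ₁ Θ₂ A B C h1 h2 ih1 ih2 =>
    intro Φ hd hg
    have hd' : Del R ((Θ₁ ++ Γ₀) ++ ldiv A B :: Θ₂) Φ := by
      simpa [List.append_assoc] using hd
    obtain ⟨Φ₁, Ψ, rfl, d1, d2⟩ := Del.split hd'
    cases d2 with
    | keep hx d2' => exact hx.2.elim
    | delg hGR d2' =>
      obtain ⟨p, q, rr, hh⟩ := hGR
      rcases hh with ⟨-, heq⟩ | ⟨-, heq⟩ <;> exact Fm.noConfusion heq
  | ldivR Γ A B h ih => intro Φ hd hg; exact hg.2.elim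
  | bangL Γ₁ Γ₂ A C h ih =>
    intro Φ hd hg
    obtain ⟨Φ₁, Ψ, rfl, d1, d2⟩ := Del.split hd
    cases d2 with
    | keep hx d2' => exact hx.1.elim
    | delb hGR d2' => exact ih (Φ₁ ++ Ψ) (Del.append d1 (Del.delg hGR d2')) hg
    | delg hGR d2' =>
      obtain ⟨p, q, rr, hh⟩ := hGR
      rcases hh with ⟨-, heq⟩ | ⟨-, heq⟩ <;> exact Fm.noConfusion heq
  | bangR Γ B h ih => intro Φ hd hg; exact hg.1.elim
  | perm1 Θ₁ Γ Θ₂ A C h ih =>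
    intro Φ hd hg
    have hd' : Del R ((Θ₁ ++ Γ) ++ bang A :: Θ₂) Φ := by
      simpa [List.append_assoc] using hd
    obtain ⟨Φ₁, Ψ, rfl, d1, d2⟩ := Del.split hd'
    obtain ⟨Φa, Φb, rfl, d1a, d1b⟩ := Del.split d1
    cases d2 with
    | keep hx d2' => exact hx.1.elim
    | delb hGR d2' =>
      have hdel : Del R (Θ₁ ++ bang A :: (Γ ++ Θ₂)) (Φa ++ (Φb ++ Ψ)) :=
        Del.append d1a (Del.delb hGR (Del.append d1b d2'))
      have := ih _ hdel hg
      simpa [List.append_assoc] using this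
    | delg hGR d2' =>
      obtain ⟨p, q, rr, hh⟩ := hGR
      rcases hh with ⟨-, heq⟩ | ⟨-, heq⟩ <;> exact Fm.noConfusion heq
  | perm2 Θ₁ Γ Θ₂ A C h ih =>
    intro Φ hd hg
    obtain ⟨Φ₁, Ψ, rfl, d1, d2⟩ := Del.split hd
    cases d2 with
    | keep hx d2' => exact hx.1.elim
    | delb hGR d2' =>
      obtain ⟨Φa, Φb, rfl, da, db⟩ := Del.split d2'
      have hdel : Del R ((Θ₁ ++ Γ) ++ bang A :: Θ₂) ((Φ₁ ++ Φa) ++ Φb) :=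
        Del.append (Del.append d1 da) (Del.delb hGR db)
      have hdel' : Del R (Θ₁ ++ Γ ++ bang A :: Θ₂) ((Φ₁ ++ Φa) ++ Φb) := by
        simpa [List.append_assoc] using hdel
      have := ih _ hdel' hg
      simpa [List.append_assoc] using this
    | delg hGR d2' =>
      obtain ⟨p, q, rr, hh⟩ := hGR
      rcases hh with ⟨-, heq⟩ | ⟨-, heq⟩ <;> exact Fm.noConfusion heq
  | contr Θ₁ Θ₂ A C h ih =>
    intro Φ hd hg
    obtain ⟨Φ₁, Ψ, rfl, d1, d2⟩ := Del.split hd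
    cases d2 with
    | keep hx d2' => exact hx.1.elim
    | delb hGR d2' => exact ih _ (Del.append d1 (Del.delb hGR (Del.delb hGR d2'))) hg
    | delg hGR d2' =>
      obtain ⟨p, q, rr, hh⟩ := hGR
      rcases hh with ⟨-, heq⟩ | ⟨-, heq⟩ <;> exact Fm.noConfusion heq

end Main

/-- If !L* derives !B, Φ → A with B ⊆ G_R, and Φ, A contain neither ! nor \,
then L* + R derives Φ → A. -/
theorem stmt9 (R : Finset BRule) (B : Finset Fm) (hB : ↑B ⊆ GRset R)
    (Φ : List Fm) (A : Fm)
    (hΦ : ∀ F ∈ Φ, bangFree F ∧ ldivFree F) (hA : bangFree A ∧ ldivFree A)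
    (h : BangL (B.toList.map bang ++ Φ) A) : LStarR R Φ A := by
  have dmap : ∀ l : List Fm, (∀ G ∈ l, G ∈ GRset R) → Del R (l.map bang) [] := by
    intro l
    induction l with
    | nil => intro _; exact Del.nil
    | cons x l ih =>
      intro hl
      exact Del.delb (hl x (by simp)) (ih fun G hG => hl G (by simp [hG]))
  have dkeep : ∀ l : List Fm, (∀ F ∈ l, bangFree F ∧ ldivFree F) → Del R l l := by
    intro l
    induction l with
    | nil => intro _; exact Del.nil
    | cons x l ih =>
      intro hl
      exact Del.keep (hl x (by simp)) (ih fun F hF => hl F (by simp [hF]))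
  have hdel : Del R (B.toList.map bang ++ Φ) ([] ++ Φ) :=
    Del.append (dmap _ fun G hG => hB (Finset.mem_coe.mpr (Finset.mem_toList.mp hG)))
      (dkeep Φ hΦ)
  exact mainLemma h Φ (by simpa using hdel) hA
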